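/- (Simpliciality, case m₃ > m₂ > m₁ ≥ 2) Assume m₃ > m₂ > m₁ ≥ 2. Then conv(S) is a simplicial polytope: for every nonempty subset F ⊆ S with F ≠ S such that the convex hull of F is an extreme subset of the convex hull of S, the set F is affinely independent. -/

import Mathlib

lemma stmt7aux_lincomb {ι M : Type*} [Fintype ι] [AddCommGroup M] [Module ℝ M]
    (v : ι → M) (f : ι → ℝ) :
    Finsupp.linearCombination ℝ v (Finsupp.equivFunOnFinite.symm f) = ∑ i, f i • v i := by
  rw [Finsupp.linearCombination_apply, Finsupp.sum_fintype]
  · simp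
  · intro i; simp

lemma stmt7aux_vertex {N : ℕ} {F : Finset (Fin N → ℝ)}
    (hF : ∀ u ∈ F, ∀ i, u i = 0 ∨ u i = 1)
    {v : Fin N → ℝ} (hv : ∀ i, v i = 0 ∨ v i = 1)
    (hmem : v ∈ convexHull ℝ (F : Set (Fin N → ℝ))) : v ∈ F := by
  obtain ⟨w, hw0, hw1, hwc⟩ := Finset.mem_convexHull.1 hmem
  rw [Finset.centerMass_eq_of_sum_1 _ _ hw1] at hwc
  have key : ∀ u ∈ F, w u ≠ 0 → u = v := by
    intro u hu hwu
    have hwu' : 0 < w u := lt_of_le_of_ne (hw0 u hu) (Ne.symm hwu)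
    funext i
    have hvi : ∑ y ∈ F, w y * y i = v i := by
      have := congrFun hwc i
      simpa [Finset.sum_apply] using this
    rcases hv i with h0 | h1
    · rw [h0] at hvi
      have hall : ∀ y ∈ F, w y * y i = 0 := by
        rw [← Finset.sum_eq_zero_iff_of_nonneg]
        · exact hvi
        · intro y hy
          rcases hF y hy i with h | h <;> rw [h] <;> simp [hw0 y hy]
      have := hall u hu
      have : u i = 0 := by
        rcases hF u hu i with h | h
        · exact h
        · rw [h, mul_one] at this; exact absurd this hwu
      rw [this, h0]
    · have hsum0 : ∑ y ∈ F, w y * (1 - y i) = 0 := by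
        have heq : ∑ y ∈ F, w y * (1 - y i) = (∑ y ∈ F, w y) - ∑ y ∈ F, w y * y i := by
          rw [← Finset.sum_sub_distrib]
          exact Finset.sum_congr rfl fun y _ => by ring
        rw [heq, hw1, hvi, h1]; ring
      have hall : ∀ y ∈ F, w y * (1 - y i) = 0 := by
        rw [← Finset.sum_eq_zero_iff_of_nonneg]
        · exact hsum0
        · intro y hy
          rcases hF y hy i with h | h <;> rw [h] <;> simp [hw0 y hy]
      have := hall u hu
      have : u i = 1 := by
        rcases hF u hu i with h | h
        · rw [h, sub_zero, mul_one] at this; exact absurd this hwu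
        · exact h
      rw [this, h1]
  obtain ⟨u, hu, hwu⟩ : ∃ u ∈ F, w u ≠ 0 := by
    by_contra hc
    push_neg at hc
    have : (1:ℝ) = 0 := by rw [← hw1]; exact Finset.sum_eq_zero hc
    norm_num at this
  exact key u hu hwu ▸ hu

noncomputable def oneVec (N : ℕ) : Fin N → ℝ := fun _ => (1:ℝ)

lemma stmt7aux_avg {N : ℕ} {V F : Finset (Fin N → ℝ)} (hVF : V ⊆ F) (hne : V.Nonempty)
    (hsum : ∑ v ∈ V, v = oneVec N) :
    ((V.card : ℝ))⁻¹ • oneVec N ∈ convexHull ℝ (F : Set (Fin N → ℝ)) := by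
  have h := Finset.centerMass_mem_convexHull (t := V) (w := fun _ => (1:ℝ)) (z := id)
    (fun i _ => zero_le_one)
    (by simpa using (by exact_mod_cast hne.card_pos : (0:ℝ) < V.card))
    (fun i hi => hVF hi)
  rwa [Finset.centerMass, show ∑ _i ∈ V, (1:ℝ) = (V.card : ℝ) by simp,
    show ∑ i ∈ V, (1:ℝ) • id i = oneVec N by simpa using hsum] at h

lemma stmt7aux_absorb {N : ℕ} {S F V : Finset (Fin N → ℝ)} (hFS : F ⊆ S) (hVS : V ⊆ S)
    (hm : 2 ≤ V.card) (hsum : ∑ v ∈ V, v = oneVec N)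
    (hext : IsExtreme ℝ (convexHull ℝ (S : Set (Fin N → ℝ))) (convexHull ℝ (F : Set (Fin N → ℝ))))
    (hp : ((V.card : ℝ))⁻¹ • oneVec N ∈ convexHull ℝ (F : Set (Fin N → ℝ))) :
    ∀ v ∈ V, v ∈ convexHull ℝ (F : Set (Fin N → ℝ)) := by
  intro v hv
  set m : ℝ := (V.card : ℝ) with hmdef
  have hm2 : (2:ℝ) ≤ m := by rw [hmdef]; exact_mod_cast hm
  have hm0 : m ≠ 0 := by linarith
  have hm1 : m - 1 ≠ 0 := by linarith
  -- q = average of V.erase v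
  set q : Fin N → ℝ := (m - 1)⁻¹ • (oneVec N - v) with hqdef
  have hsumerase : ∑ u ∈ V.erase v, u = oneVec N - v := by
    rw [Finset.sum_erase_eq_sub hv, hsum]
  have hcarderase : ((V.erase v).card : ℝ) = m - 1 := by
    rw [Finset.card_erase_of_mem hv]
    have : 1 ≤ V.card := le_trans one_le_two hm
    push_cast [Nat.cast_sub this]
    ring
  have hq : q ∈ convexHull ℝ (S : Set (Fin N → ℝ)) := by
    have h := Finset.centerMass_mem_convexHull (t := V.erase v) (w := fun _ => (1:ℝ)) (z := id)
      (fun i _ => zero_le_one)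
      (by rw [show ∑ _i ∈ V.erase v, (1:ℝ) = ((V.erase v).card : ℝ) by simp, hcarderase]; linarith)
      (fun i hi => hVS (Finset.erase_subset _ _ hi))
    rwa [Finset.centerMass, show ∑ _i ∈ V.erase v, (1:ℝ) = ((V.erase v).card : ℝ) by simp,
      hcarderase, show ∑ i ∈ V.erase v, (1:ℝ) • id i = oneVec N - v by simpa using hsumerase] at h
  have hvS : v ∈ convexHull ℝ (S : Set (Fin N → ℝ)) :=
    subset_convexHull ℝ _ (hVS hv)
  have hseg : m⁻¹ • oneVec N ∈ openSegment ℝ v q := by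
    refine ⟨m⁻¹, 1 - m⁻¹, by positivity, ?_, by ring, ?_⟩
    · have : m⁻¹ < 1 := by
        rw [inv_lt_one_iff₀]; right; linarith
      linarith
    · rw [hqdef, smul_smul, show (1 - m⁻¹) * (m - 1)⁻¹ = m⁻¹ by field_simp,
        smul_sub]
      abel
  exact (hext.2 hvS hq hp hseg)

lemma stmt7aux_seg {N : ℕ} {m1 m2 m3 : ℕ} (h1 : 2 ≤ m1) (h12 : m1 < m2) (h23 : m2 < m3) :
    ((m2:ℝ))⁻¹ • oneVec N ∈ openSegment ℝ (((m3:ℝ))⁻¹ • oneVec N) (((m1:ℝ))⁻¹ • oneVec N) := by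
  have c1 : (2:ℝ) ≤ (m1:ℝ) := by exact_mod_cast h1
  have c12 : (m1:ℝ) < m2 := by exact_mod_cast h12
  have c23 : (m2:ℝ) < m3 := by exact_mod_cast h23
  have p1 : (0:ℝ) < m1 := by linarith
  have p2 : (0:ℝ) < m2 := by linarith
  have p3 : (0:ℝ) < m3 := by linarith
  have d1 : (0:ℝ) < (m2:ℝ) - m1 := by linarith
  have d2 : (0:ℝ) < (m3:ℝ) - m2 := by linarith
  have d3 : (0:ℝ) < (m3:ℝ) - m1 := by linarith
  have n1 : (m1:ℝ) ≠ 0 := ne_of_gt p1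
  have n2 : (m2:ℝ) ≠ 0 := ne_of_gt p2
  have n3 : (m3:ℝ) ≠ 0 := ne_of_gt p3
  have nd3 : (m3:ℝ) - m1 ≠ 0 := ne_of_gt d3
  refine ⟨(m3 * (m2 - m1)) / (m2 * (m3 - m1)), (m1 * (m3 - m2)) / (m2 * (m3 - m1)),
    by positivity, by positivity,
    by rw [← add_div, div_eq_one_iff_eq (by positivity)]; ring, ?_⟩
  rw [smul_smul, smul_smul, ← add_smul]
  congr 1
  field_simp
  ring


theorem stmt_7
    (n : ℕ) (hn : 0 < n)
    (S V1 V2 V3 : Finset (Fin (2 * n) → ℝ))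
    (h01 : ∀ v ∈ S, ∀ i, v i = 0 ∨ v i = 1)
    (hScard : S.card = n + 2)
    (hunion : V1 ∪ V2 ∪ V3 = S)
    (hd12 : Disjoint V1 V2) (hd13 : Disjoint V1 V3) (hd23 : Disjoint V2 V3)
    (hne1 : V1.Nonempty) (hne2 : V2.Nonempty) (hne3 : V3.Nonempty)
    (hsum1 : ∑ v ∈ V1, v = fun _ => (1 : ℝ))
    (hsum2 : ∑ v ∈ V2, v = fun _ => (1 : ℝ))
    (hsum3 : ∑ v ∈ V3, v = fun _ => (1 : ℝ))
    (hspan : Module.finrank ℝ (Submodule.span ℝ (S : Set (Fin (2 * n) → ℝ))) = n)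
    (hm1 : 2 ≤ V1.card) (h12 : V1.card < V2.card) (h23 : V2.card < V3.card)
    : ∀ F ⊆ S, F.Nonempty → F ≠ S →
      IsExtreme ℝ (convexHull ℝ (S : Set (Fin (2 * n) → ℝ)))
        (convexHull ℝ (F : Set (Fin (2 * n) → ℝ))) →
      AffineIndependent ℝ (fun x : {x // x ∈ F} => (x : Fin (2 * n) → ℝ)) := by
  classical
  intro F hFS hFne hFneS hext
  -- basic set facts
  have hV1S : V1 ⊆ S := by
    rw [← hunion]; exact Finset.subset_union_left.trans Finset.subset_union_left
  have hV2S : V2 ⊆ S := by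
    rw [← hunion]; exact Finset.subset_union_right.trans Finset.subset_union_left
  have hV3S : V3 ⊆ S := by rw [← hunion]; exact Finset.subset_union_right
  have hm2 : 2 ≤ V2.card := le_trans hm1 h12.le
  have hm3 : 2 ≤ V3.card := le_trans hm2 h23.le
  have hs1 : ∑ v ∈ V1, v = oneVec (2*n) := hsum1
  have hs2 : ∑ v ∈ V2, v = oneVec (2*n) := hsum2
  have hs3 : ∑ v ∈ V3, v = oneVec (2*n) := hsum3
  -- absorption: if the barycenter of V lies in conv F then V ⊆ F
  have habsorb : ∀ {V : Finset (Fin (2*n) → ℝ)}, V ⊆ S → 2 ≤ V.card →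
      (∑ v ∈ V, v = oneVec (2*n)) →
      ((V.card : ℝ))⁻¹ • oneVec (2*n) ∈ convexHull ℝ (F : Set (Fin (2*n) → ℝ)) → V ⊆ F := by
    intro V hVS hm hsum hp v hv
    exact stmt7aux_vertex (fun u hu => h01 u (hFS hu)) (h01 v (hVS hv))
      (stmt7aux_absorb hFS hVS hm hsum hext hp v hv)
  have hFeq : V1 ⊆ F → V2 ⊆ F → V3 ⊆ F → False := by
    intro h1 h2 h3
    exact hFneS (Finset.Subset.antisymm hFS
      (by rw [← hunion]; exact Finset.union_subset (Finset.union_subset h1 h2) h3))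
  have hseg := stmt7aux_seg (N := 2*n) hm1 h12 h23
  have hp1S := stmt7aux_avg hV1S hne1 hs1
  have hp3S := stmt7aux_avg hV3S hne3 hs3
  -- the three closure contradictions
  have hclose12 : V1 ⊆ F → V2 ⊆ F → False := by
    intro h1 h2
    have hp2 := stmt7aux_avg h2 hne2 hs2
    have h3 := (hext.2 hp3S hp1S hp2 hseg)
    exact hFeq h1 h2 (habsorb hV3S hm3 hs3 h3)
  have hclose23 : V2 ⊆ F → V3 ⊆ F → False := by
    intro h2 h3
    have hp2 := stmt7aux_avg h2 hne2 hs2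
    have h1 := (hext.right_mem_of_mem_openSegment hp3S hp1S hp2 hseg)
    exact hFeq (habsorb hV1S hm1 hs1 h1) h2 h3
  have hclose13 : V1 ⊆ F → V3 ⊆ F → False := by
    intro h1 h3
    have hp1 := stmt7aux_avg h1 hne1 hs1
    have hp3 := stmt7aux_avg h3 hne3 hs3
    have hp2 : ((V2.card : ℝ))⁻¹ • oneVec (2*n) ∈ convexHull ℝ (F : Set (Fin (2*n) → ℝ)) :=
      (convex_convexHull ℝ _).segment_subset hp3 hp1 (openSegment_subset_segment ℝ _ _ hseg)
    exact hFeq h1 (habsorb hV2S hm2 hs2 hp2) h3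
  -- linear algebra setup
  set ι := {x // x ∈ S}
  have hfinS : FiniteDimensional ℝ (ι →₀ ℝ) :=
    Module.Finite.equiv (Finsupp.linearEquivFunOnFinite ℝ ℝ ι).symm
  set T : (ι →₀ ℝ) →ₗ[ℝ] (Fin (2*n) → ℝ) :=
    Finsupp.linearCombination ℝ (fun x : ι => (x : Fin (2*n) → ℝ)) with hTdef
  have hkerrank : Module.finrank ℝ (LinearMap.ker T) = 2 := by
    have hrn := LinearMap.finrank_range_add_finrank_ker T
    have hrange : LinearMap.range T = Submodule.span ℝ (S : Set (Fin (2*n) → ℝ)) := by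
      rw [hTdef, Finsupp.range_linearCombination,
        show (Set.range fun x : ι => (x : Fin (2*n) → ℝ)) = (S : Set (Fin (2*n) → ℝ)) from
          Subtype.range_coe]
    rw [hrange, hspan, Module.finrank_finsupp_self, Fintype.card_coe, hScard] at hrn
    omega
  -- the two relations
  set f1 : ι → ℝ := fun x =>
    if (x : Fin (2*n) → ℝ) ∈ V1 then 1 else if (x : Fin (2*n) → ℝ) ∈ V2 then -1 else 0 with hf1
  set f2 : ι → ℝ := fun x =>
    if (x : Fin (2*n) → ℝ) ∈ V2 then 1 else if (x : Fin (2*n) → ℝ) ∈ V3 then -1 else 0 with hf2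
  set r1 := Finsupp.equivFunOnFinite.symm f1 with hr1
  set r2 := Finsupp.equivFunOnFinite.symm f2 with hr2
  have hd123 : Disjoint (V1 ∪ V2) V3 := Finset.disjoint_union_left.2 ⟨hd13, hd23⟩
  have hsum_split : ∀ g : (Fin (2*n) → ℝ) → (Fin (2*n) → ℝ),
      ∑ v ∈ S, g v = ∑ v ∈ V1, g v + ∑ v ∈ V2, g v + ∑ v ∈ V3, g v := by
    intro g
    rw [← hunion, Finset.sum_union hd123, Finset.sum_union hd12]
  have hTr1 : T r1 = 0 := by
    rw [hTdef, hr1, stmt7aux_lincomb]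
    rw [show ∑ x : ι, f1 x • (x : Fin (2*n) → ℝ) =
        ∑ v ∈ S, (if v ∈ V1 then (1:ℝ) else if v ∈ V2 then -1 else 0) • v from
      Finset.sum_coe_sort S (fun v => (if v ∈ V1 then (1:ℝ) else if v ∈ V2 then -1 else 0) • v)]
    rw [hsum_split]
    have e1 : ∑ v ∈ V1, (if v ∈ V1 then (1:ℝ) else if v ∈ V2 then -1 else 0) • v
        = ∑ v ∈ V1, v :=
      Finset.sum_congr rfl (fun v hv => by rw [if_pos hv, one_smul])
    have e2 : ∑ v ∈ V2, (if v ∈ V1 then (1:ℝ) else if v ∈ V2 then -1 else 0) • v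
        = ∑ v ∈ V2, (-1:ℝ) • v :=
      Finset.sum_congr rfl (fun v hv => by
        rw [if_neg (Finset.disjoint_right.1 hd12 hv), if_pos hv])
    have e3 : ∑ v ∈ V3, (if v ∈ V1 then (1:ℝ) else if v ∈ V2 then -1 else 0) • v
        = ∑ v ∈ V3, (0:Fin (2*n) → ℝ) :=
      Finset.sum_congr rfl (fun v hv => by
        rw [if_neg (Finset.disjoint_right.1 hd13 hv),
          if_neg (Finset.disjoint_right.1 hd23 hv), zero_smul])
    rw [e1, e2, e3, ← Finset.smul_sum, hsum1, hsum2]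
    simp
  have hTr2 : T r2 = 0 := by
    rw [hTdef, hr2, stmt7aux_lincomb]
    rw [show ∑ x : ι, f2 x • (x : Fin (2*n) → ℝ) =
        ∑ v ∈ S, (if v ∈ V2 then (1:ℝ) else if v ∈ V3 then -1 else 0) • v from
      Finset.sum_coe_sort S (fun v => (if v ∈ V2 then (1:ℝ) else if v ∈ V3 then -1 else 0) • v)]
    rw [hsum_split]
    have e1 : ∑ v ∈ V1, (if v ∈ V2 then (1:ℝ) else if v ∈ V3 then -1 else 0) • v
        = ∑ v ∈ V1, (0:Fin (2*n) → ℝ) :=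
      Finset.sum_congr rfl (fun v hv => by
        rw [if_neg (Finset.disjoint_left.1 hd12 hv),
          if_neg (Finset.disjoint_left.1 hd13 hv), zero_smul])
    have e2 : ∑ v ∈ V2, (if v ∈ V2 then (1:ℝ) else if v ∈ V3 then -1 else 0) • v
        = ∑ v ∈ V2, v :=
      Finset.sum_congr rfl (fun v hv => by rw [if_pos hv, one_smul])
    have e3 : ∑ v ∈ V3, (if v ∈ V2 then (1:ℝ) else if v ∈ V3 then -1 else 0) • v
        = ∑ v ∈ V3, (-1:ℝ) • v :=
      Finset.sum_congr rfl (fun v hv => by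
        rw [if_neg (Finset.disjoint_right.1 hd23 hv), if_pos hv])
    rw [e1, e2, e3, ← Finset.smul_sum, hsum2, hsum3]
    simp
  obtain ⟨v1, hv1⟩ := hne1
  obtain ⟨v3, hv3⟩ := hne3
  have hli : LinearIndependent ℝ ![r1, r2] := by
    rw [LinearIndependent.pair_iff]
    intro s t hst
    have h1 := congrFun (congrArg (fun l : ι →₀ ℝ => (l : ι → ℝ)) hst) ⟨v1, hV1S hv1⟩
    have h3 := congrFun (congrArg (fun l : ι →₀ ℝ => (l : ι → ℝ)) hst) ⟨v3, hV3S hv3⟩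
    simp only [hr1, hr2, hf1, hf2, Finsupp.coe_add, Finsupp.coe_smul, Pi.add_apply,
      Pi.smul_apply, Finsupp.coe_equivFunOnFinite_symm, smul_eq_mul,
      Finsupp.coe_zero, Pi.zero_apply] at h1 h3
    rw [if_pos hv1, if_neg (Finset.disjoint_left.1 hd12 hv1),
      if_neg (Finset.disjoint_left.1 hd13 hv1)] at h1
    rw [if_neg (Finset.disjoint_right.1 hd13 hv3), if_neg (Finset.disjoint_right.1 hd23 hv3),
      if_neg (Finset.disjoint_right.1 hd23 hv3), if_pos hv3] at h3
    constructor
    · linarith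
    · linarith
  have hspanle : Submodule.span ℝ (Set.range ![r1, r2]) ≤ LinearMap.ker T := by
    rw [Submodule.span_le]
    rintro x ⟨i, rfl⟩
    fin_cases i
    · exact hTr1
    · exact hTr2
  have hkereq : Submodule.span ℝ (Set.range ![r1, r2]) = LinearMap.ker T := by
    apply Submodule.eq_of_le_of_finrank_eq hspanle
    rw [hkerrank, finrank_span_eq_card hli]
    simp
  -- affine independence
  rw [affineIndependent_iff_of_fintype]
  intro w hw0 hwv
  rw [Finset.weightedVSub_eq_linear_combination _ hw0] at hwv
  set φ : ι → ℝ := fun x => if h : (x : Fin (2*n) → ℝ) ∈ F then w ⟨x, h⟩ else 0 with hφdef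
  have hTφ : T (Finsupp.equivFunOnFinite.symm φ) = 0 := by
    rw [hTdef, stmt7aux_lincomb]
    rw [show ∑ x : ι, φ x • (x : Fin (2*n) → ℝ) =
        ∑ v ∈ S, (if h : v ∈ F then w ⟨v, h⟩ else 0) • v from
      Finset.sum_coe_sort S (fun v => (if h : v ∈ F then w ⟨v, h⟩ else 0) • v)]
    rw [← Finset.sum_subset hFS (fun v _ hv => by rw [dif_neg hv, zero_smul])]
    rw [show ∑ v ∈ F, (if h : v ∈ F then w ⟨v, h⟩ else 0) • v
        = ∑ x : {x // x ∈ F}, w x • (x : Fin (2*n) → ℝ) by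
      rw [← Finset.sum_coe_sort F (fun v => (if h : v ∈ F then w ⟨v, h⟩ else 0) • v)]
      exact Finset.sum_congr rfl (fun x _ => by rw [dif_pos x.2])]
    exact hwv
  have hφmem : Finsupp.equivFunOnFinite.symm φ ∈ Submodule.span ℝ (Set.range ![r1, r2]) := by
    rw [hkereq]; exact LinearMap.mem_ker.2 hTφ
  rw [Submodule.mem_span_range_iff_exists_fun] at hφmem
  obtain ⟨c, hc⟩ := hφmem
  set a := c 0 with hadef
  set b := c 1 with hbdef
  have hc' : a • r1 + b • r2 = Finsupp.equivFunOnFinite.symm φ := by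
    rw [← hc, Fin.sum_univ_two]
    simp
    rfl
  have hφval : ∀ x : ι, φ x = a * f1 x + b * f2 x := by
    intro x
    have := congrFun (congrArg (fun l : ι →₀ ℝ => (l : ι → ℝ)) hc') x
    simpa [hr1, hr2] using this.symm
  -- coefficient extraction
  have hmemV1 : a ≠ 0 → V1 ⊆ F := by
    intro ha v hv
    by_contra hvF
    have h := hφval ⟨v, hV1S hv⟩
    rw [hφdef] at h
    simp only [hf1, hf2] at h
    rw [dif_neg hvF, if_pos hv, if_neg (Finset.disjoint_left.1 hd12 hv),
      if_neg (Finset.disjoint_left.1 hd13 hv)] at h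
    simp at h
    exact ha h.symm
  have hmemV2 : b - a ≠ 0 → V2 ⊆ F := by
    intro hba v hv
    by_contra hvF
    have h := hφval ⟨v, hV2S hv⟩
    rw [hφdef] at h
    simp only [hf1, hf2] at h
    rw [dif_neg hvF, if_neg (Finset.disjoint_right.1 hd12 hv), if_pos hv, if_pos hv] at h
    apply hba
    linarith
  have hmemV3 : b ≠ 0 → V3 ⊆ F := by
    intro hb v hv
    by_contra hvF
    have h := hφval ⟨v, hV3S hv⟩
    rw [hφdef] at h
    simp only [hf1, hf2] at h
    rw [dif_neg hvF, if_neg (Finset.disjoint_right.1 hd13 hv),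
      if_neg (Finset.disjoint_right.1 hd23 hv), if_neg (Finset.disjoint_right.1 hd23 hv),
      if_pos hv] at h
    apply hb
    linarith
  have hab : a = 0 ∧ b = 0 := by
    by_cases ha : a = 0 <;> by_cases hb : b = 0
    · exact ⟨ha, hb⟩
    · exact absurd (hclose23 (hmemV2 (by rw [ha, sub_zero]; exact hb)) (hmemV3 hb)) not_false
    · exact absurd (hclose12 (hmemV1 ha) (hmemV2 (by rw [hb, zero_sub]; exact neg_ne_zero.2 ha)))
        not_false
    · exact absurd (hclose13 (hmemV1 ha) (hmemV3 hb)) not_false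
  intro i
  have : w i = φ ⟨(i : Fin (2*n) → ℝ), hFS i.2⟩ := by
    rw [hφdef]
    simp only []
    rw [dif_pos i.2]
  rw [this, hφval, hab.1, hab.2]
  ring
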